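/- arXiv:1611.05936 — 2 statements merged into one kernel-verified Lean document; each statement's English description precedes it below -/
import Mathlib

section
/- Let Ω ⊆ ℝⁿ be open, O ⋐ Ω, u ∈ C¹(Ω, ℝᴺ), H ∈ C²(Ω × ℝᴺ × ℝ^{N×n}, ℝ), and A : ℝⁿ → ℝᴺ affine. Define r(λ) := E_∞(u + λA, O) − E_∞(u, O) for λ ≥ 0, where E_∞(v, O) := max_{y ∈ O̅} H(y, v(y), Dv(y)). Let O(u) := { y ∈ O̅ : H(y, u(y), Du(y)) = E_∞(u, O) }. Then the lower right Dini derivative of r at 0 satisfies liminf_{λ→0⁺} r(λ)/λ ≥ max over x ∈ O(u) of [ ⟨H_P(x, u(x), Du(x)), DA⟩ + ⟨H_η(x, u(x), Du(x)), A(x)⟩ ]. -/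
open scoped RealInnerProductSpace
open Filter Topology

noncomputable section

/-- The gradient matrix `Dv(x) ∈ ℝ^{N×n}` of a map `v : ℝⁿ → ℝᴺ`. -/
def gradMatrix {n N : ℕ} (v : EuclideanSpace ℝ (Fin n) → EuclideanSpace ℝ (Fin N))
    (x : EuclideanSpace ℝ (Fin n)) : EuclideanSpace ℝ (Fin N × Fin n) :=
  (WithLp.equiv 2 _).symm fun p => fderiv ℝ v x (EuclideanSpace.single p.2 1) p.1

lemma gradMatrix_add_smul {n N : ℕ}
    {u A : EuclideanSpace ℝ (Fin n) → EuclideanSpace ℝ (Fin N)}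
    {z : EuclideanSpace ℝ (Fin n)} (hu : DifferentiableAt ℝ u z)
    (hA : DifferentiableAt ℝ A z) (lam : ℝ) :
    gradMatrix (fun w => u w + lam • A w) z = gradMatrix u z + lam • gradMatrix A z := by
  have h1 : fderiv ℝ (fun w => u w + lam • A w) z
      = fderiv ℝ u z + lam • fderiv ℝ A z := by
    rw [fderiv_fun_add (g := fun w => lam • A w) hu (hA.const_smul lam), fderiv_fun_const_smul hA lam]
  ext p
  simp [gradMatrix, h1, PiLp.add_apply, PiLp.smul_apply]

lemma gradMatrix_continuousOn {n N : ℕ} {Ω : Set (EuclideanSpace ℝ (Fin n))}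
    (hΩ : IsOpen Ω) {v : EuclideanSpace ℝ (Fin n) → EuclideanSpace ℝ (Fin N)}
    (hv : ContDiffOn ℝ 1 v Ω) : ContinuousOn (gradMatrix v) Ω := by
  have hf : ContinuousOn (fderiv ℝ v) Ω := hv.continuousOn_fderiv_of_isOpen hΩ le_rfl
  have h2 : ContinuousOn (fun z => (fun p : Fin N × Fin n =>
      fderiv ℝ v z (EuclideanSpace.single p.2 1) p.1)) Ω := by
    apply continuousOn_pi.2
    intro p
    exact (EuclideanSpace.proj p.1).continuous.comp_continuousOn
      ((ContinuousLinearMap.apply ℝ _ (EuclideanSpace.single p.2 1)).continuous.comp_continuousOn hf)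
  exact ((PiLp.continuousLinearEquiv 2 ℝ _).symm.continuous.comp_continuousOn h2 : _)

/-- The supremal functional `E_∞(v, O) = sup_{x ∈ O̅} H(x, v(x), Dv(x))`. -/
def Einf {n N : ℕ}
    (H : EuclideanSpace ℝ (Fin n) × EuclideanSpace ℝ (Fin N) ×
      EuclideanSpace ℝ (Fin N × Fin n) → ℝ)
    (v : EuclideanSpace ℝ (Fin n) → EuclideanSpace ℝ (Fin N))
    (O : Set (EuclideanSpace ℝ (Fin n))) : ℝ :=
  sSup ((fun z => H (z, v z, gradMatrix v z)) '' closure O)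

/-- Lemma 2 of the paper, one-sided Danskin inequality. With
`r(λ) = E_∞(u + λA, O) − E_∞(u, O)`, the lower right Dini derivative of `r` at zero
dominates the maximum over the argmax set `O(u)` of
`⟨H_P(x,u(x),Du(x)), DA⟩ + ⟨H_η(x,u(x),Du(x)), A(x)⟩`. -/
theorem danskin_lower_dini_bound {n N : ℕ}
    (Ω O : Set (EuclideanSpace ℝ (Fin n))) (hΩ : IsOpen Ω)
    (hOc : IsCompact (closure O)) (hOΩ : closure O ⊆ Ω)
    (u : EuclideanSpace ℝ (Fin n) → EuclideanSpace ℝ (Fin N))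
    (hu : ContDiffOn ℝ 1 u Ω)
    (H : EuclideanSpace ℝ (Fin n) × EuclideanSpace ℝ (Fin N) ×
      EuclideanSpace ℝ (Fin N × Fin n) → ℝ)
    (hH : ContDiffOn ℝ 2 H (Ω ×ˢ (Set.univ : Set (EuclideanSpace ℝ (Fin N) ×
      EuclideanSpace ℝ (Fin N × Fin n)))))
    (A : EuclideanSpace ℝ (Fin n) → EuclideanSpace ℝ (Fin N))
    (LA : EuclideanSpace ℝ (Fin n) →ₗ[ℝ] EuclideanSpace ℝ (Fin N))
    (bA : EuclideanSpace ℝ (Fin N)) (hA : ∀ z, A z = LA z + bA)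
    (r : ℝ → ℝ)
    (hr : ∀ lam : ℝ, r lam = Einf H (fun z => u z + lam • A z) O - Einf H u O) :
    ∀ x ∈ {y ∈ closure O | H (y, u y, gradMatrix u y) = Einf H u O},
      ⟪gradient (fun Q => H (x, u x, Q)) (gradMatrix u x), gradMatrix A x⟫
          + ⟪gradient (fun η => H (x, η, gradMatrix u x)) (u x), A x⟫ ≤
        Filter.liminf (fun lam : ℝ => r lam / lam)
          (nhdsWithin (0 : ℝ) (Set.Ioi 0)) := by
  intro x hx
  obtain ⟨hxO, hxE⟩ := hx
  have hxΩ : x ∈ Ω := hOΩ hxO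
  set Lc := LinearMap.toContinuousLinearMap LA with hLc
  have hAeq : A = fun z => Lc z + bA := funext fun z => hA z
  have hAd : ∀ z, DifferentiableAt ℝ A z := by
    intro z
    rw [hAeq]
    exact (Lc.differentiable.add_const bA) z
  have hAcd : ContDiff ℝ 1 A := by
    rw [hAeq]; exact Lc.contDiff.add contDiff_const
  have hud : ∀ z ∈ Ω, DifferentiableAt ℝ u z := fun z hz =>
    (hu.contDiffAt (hΩ.mem_nhds hz)).differentiableAt one_ne_zero
  have hHc : ContinuousOn H (Ω ×ˢ (Set.univ : Set _)) := hH.continuousOn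
  have key : ∀ v : EuclideanSpace ℝ (Fin n) → EuclideanSpace ℝ (Fin N),
      ContDiffOn ℝ 1 v Ω →
      ContinuousOn (fun z => H (z, v z, gradMatrix v z)) (closure O) := by
    intro v hv
    have h1 : ContinuousOn (fun z => ((z, v z, gradMatrix v z) :
        EuclideanSpace ℝ (Fin n) × EuclideanSpace ℝ (Fin N) ×
          EuclideanSpace ℝ (Fin N × Fin n))) Ω :=
      continuousOn_id.prodMk ((hv.continuousOn).prodMk (gradMatrix_continuousOn hΩ hv))
    exact (hHc.comp h1 (fun z hz => ⟨hz, trivial⟩)).mono hOΩ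
  have hEinfu_bdd : BddAbove ((fun z => H (z, u z, gradMatrix u z)) '' closure O) :=
    (hOc.image_of_continuousOn (key u hu)).bddAbove
  set M := gradMatrix A x with hM
  set P := gradMatrix u x with hP
  set φ : ℝ → ℝ := fun lam => H (x, u x + lam • A x, P + lam • M) with hφ
  have hφ0 : φ 0 = Einf H u O := by simp [hφ, ← hxE, hP]
  have hcomp : ∀ lam : ℝ, φ lam - φ 0 ≤ r lam := by
    intro lam
    have hvcd : ContDiffOn ℝ 1 (fun z => u z + lam • A z) Ω :=
      hu.add ((hAcd.const_smul lam).contDiffOn)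
    have hbdd : BddAbove ((fun z => H (z, (u z + lam • A z),
        gradMatrix (fun w => u w + lam • A w) z)) '' closure O) :=
      (hOc.image_of_continuousOn (key _ hvcd)).bddAbove
    have hmem : H (x, u x + lam • A x, gradMatrix (fun w => u w + lam • A w) x)
        ∈ (fun z => H (z, (u z + lam • A z),
          gradMatrix (fun w => u w + lam • A w) z)) '' closure O := ⟨x, hxO, rfl⟩
    have h2 : φ lam ≤ Einf H (fun z => u z + lam • A z) O := by
      have h3 : gradMatrix (fun w => u w + lam • A w) x = P + lam • M := by
        rw [hP, hM]; exact gradMatrix_add_smul (hud x hxΩ) (hAd x) lam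
      have := le_csSup hbdd hmem
      rw [h3] at this
      exact this
    have := hr lam
    rw [hφ0]
    linarith
  -- derivative of φ at 0
  set p : EuclideanSpace ℝ (Fin n) × EuclideanSpace ℝ (Fin N) ×
      EuclideanSpace ℝ (Fin N × Fin n) := (x, u x, P) with hpd
  have hpmem : p ∈ Ω ×ˢ (Set.univ : Set _) := ⟨hxΩ, trivial⟩
  have hopen : IsOpen (Ω ×ˢ (Set.univ : Set (EuclideanSpace ℝ (Fin N) ×
      EuclideanSpace ℝ (Fin N × Fin n)))) := hΩ.prod isOpen_univ
  have hHd : DifferentiableAt ℝ H p :=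
    (hH.contDiffAt (hopen.mem_nhds hpmem)).differentiableAt two_ne_zero
  have hc : HasDerivAt (fun lam : ℝ => ((x, u x + lam • A x, P + lam • M) :
      EuclideanSpace ℝ (Fin n) × EuclideanSpace ℝ (Fin N) ×
        EuclideanSpace ℝ (Fin N × Fin n)))
      ((0 : EuclideanSpace ℝ (Fin n)), A x, M) 0 := by
    have h1 : HasDerivAt (fun lam : ℝ => u x + lam • A x) (A x) 0 := by
      simpa using ((hasDerivAt_id (0:ℝ)).smul_const (A x)).const_add (u x)
    have h2 : HasDerivAt (fun lam : ℝ => P + lam • M) M 0 := by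
      simpa using ((hasDerivAt_id (0:ℝ)).smul_const M).const_add P
    exact (hasDerivAt_const (0:ℝ) x).prodMk (h1.prodMk h2)
  have hHd2 : HasFDerivAt H (fderiv ℝ H p) ((x, u x + (0:ℝ) • A x, P + (0:ℝ) • M) :
      EuclideanSpace ℝ (Fin n) × EuclideanSpace ℝ (Fin N) ×
        EuclideanSpace ℝ (Fin N × Fin n)) := by
    have hc0 : ((x, u x + (0:ℝ) • A x, P + (0:ℝ) • M) :
        EuclideanSpace ℝ (Fin n) × EuclideanSpace ℝ (Fin N) ×
          EuclideanSpace ℝ (Fin N × Fin n)) = p := by simp [hpd]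
    rw [hc0]
    exact hHd.hasFDerivAt
  have hφd : HasDerivAt φ (fderiv ℝ H p ((0 : EuclideanSpace ℝ (Fin n)), A x, M)) 0 :=
    hHd2.comp_hasDerivAt 0 hc
  set d := fderiv ℝ H p ((0 : EuclideanSpace ℝ (Fin n)), A x, M) with hd
  have hdQ : ⟪gradient (fun Q => H (x, u x, Q)) P, M⟫
      = fderiv ℝ H p ((0 : EuclideanSpace ℝ (Fin n)),
        (0 : EuclideanSpace ℝ (Fin N)), M) := by
    have hincl : HasFDerivAt (fun Q : EuclideanSpace ℝ (Fin N × Fin n) =>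
        ((x, u x, Q) : EuclideanSpace ℝ (Fin n) × EuclideanSpace ℝ (Fin N) ×
          EuclideanSpace ℝ (Fin N × Fin n)))
        ((0 : _ →L[ℝ] EuclideanSpace ℝ (Fin n)).prod
          ((0 : _ →L[ℝ] EuclideanSpace ℝ (Fin N)).prod (ContinuousLinearMap.id ℝ _))) P :=
      (hasFDerivAt_const x P).prodMk ((hasFDerivAt_const (u x) P).prodMk (hasFDerivAt_id P))
    have hcm : HasFDerivAt (fun Q => H (x, u x, Q))
        ((fderiv ℝ H p).comp _) P := hHd.hasFDerivAt.comp P hincl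
    rw [gradient, hcm.fderiv, InnerProductSpace.toDual_symm_apply]
    simp
  have hdη : ⟪gradient (fun η => H (x, η, P)) (u x), A x⟫
      = fderiv ℝ H p ((0 : EuclideanSpace ℝ (Fin n)), A x,
        (0 : EuclideanSpace ℝ (Fin N × Fin n))) := by
    have hincl : HasFDerivAt (fun η : EuclideanSpace ℝ (Fin N) =>
        ((x, η, P) : EuclideanSpace ℝ (Fin n) × EuclideanSpace ℝ (Fin N) ×
          EuclideanSpace ℝ (Fin N × Fin n)))
        ((0 : _ →L[ℝ] EuclideanSpace ℝ (Fin n)).prod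
          ((ContinuousLinearMap.id ℝ _).prod (0 : _ →L[ℝ] EuclideanSpace ℝ (Fin N × Fin n))))
        (u x) :=
      (hasFDerivAt_const x (u x)).prodMk ((hasFDerivAt_id (u x)).prodMk (hasFDerivAt_const P (u x)))
    have hcm : HasFDerivAt (fun η => H (x, η, P))
        ((fderiv ℝ H p).comp _) (u x) := hHd.hasFDerivAt.comp (u x) hincl
    rw [gradient, hcm.fderiv, InnerProductSpace.toDual_symm_apply]
    simp
  have hdsum : ⟪gradient (fun Q => H (x, u x, Q)) P, M⟫
      + ⟪gradient (fun η => H (x, η, P)) (u x), A x⟫ = d := by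
    rw [hdQ, hdη, hd, ← map_add]
    congr 1
    simp [Prod.ext_iff]
  -- coboundedness: r lam ≤ C * lam on (0,1]
  have hMcont : ContinuousOn (gradMatrix A) Set.univ :=
    gradMatrix_continuousOn isOpen_univ hAcd.contDiffOn
  have hucont : ContinuousOn (gradMatrix u) Ω := gradMatrix_continuousOn hΩ hu
  set c : ℝ × EuclideanSpace ℝ (Fin n) →
      EuclideanSpace ℝ (Fin n) × EuclideanSpace ℝ (Fin N) ×
        EuclideanSpace ℝ (Fin N × Fin n) :=
    fun q => (q.2, u q.2 + q.1 • A q.2, gradMatrix u q.2 + q.1 • gradMatrix A q.2) with hcdef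
  set K : Set (ℝ × EuclideanSpace ℝ (Fin n)) := Set.Icc 0 1 ×ˢ closure O with hK
  have hKc : IsCompact K := (isCompact_Icc).prod hOc
  have hccont : ContinuousOn c K := by
    have hsnd : ContinuousOn (fun q : ℝ × EuclideanSpace ℝ (Fin n) => q.2) K :=
      continuous_snd.continuousOn
    have hmapsto : Set.MapsTo (fun q : ℝ × EuclideanSpace ℝ (Fin n) => q.2) K (closure O) :=
      fun q hq => hq.2
    refine hsnd.prodMk (ContinuousOn.prodMk ?_ ?_)
    · exact ((hu.continuousOn.mono hOΩ).comp hsnd hmapsto).add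
        (continuousOn_fst.smul ((hAcd.continuous.comp_continuousOn hsnd)))
    · exact ((hucont.mono hOΩ).comp hsnd hmapsto).add
        (continuousOn_fst.smul ((hMcont.mono (Set.subset_univ _)).comp hsnd
          (fun q hq => Set.mem_univ _)))
  have hcK : ∀ q ∈ K, c q ∈ Ω ×ˢ (Set.univ : Set (EuclideanSpace ℝ (Fin N) ×
      EuclideanSpace ℝ (Fin N × Fin n))) := fun q hq => ⟨hOΩ hq.2, trivial⟩
  have hDHcont : ContinuousOn (fderiv ℝ H) (Ω ×ˢ (Set.univ : Set _)) :=
    hH.continuousOn_fderiv_of_isOpen hopen one_le_two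
  set h2 : ℝ × EuclideanSpace ℝ (Fin n) → ℝ := fun q => ‖fderiv ℝ H (c q)
    ((0 : EuclideanSpace ℝ (Fin n)), A q.2, gradMatrix A q.2)‖ with hh2
  have hh2cont : ContinuousOn h2 K := by
    have h3 : ContinuousOn (fun q : ℝ × EuclideanSpace ℝ (Fin n) =>
        fderiv ℝ H (c q)) K := hDHcont.comp hccont hcK
    have h4 : ContinuousOn (fun q : ℝ × EuclideanSpace ℝ (Fin n) =>
        (((0 : EuclideanSpace ℝ (Fin n)), A q.2, gradMatrix A q.2) :
          EuclideanSpace ℝ (Fin n) × EuclideanSpace ℝ (Fin N) ×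
            EuclideanSpace ℝ (Fin N × Fin n))) K :=
      continuousOn_const.prodMk
        ((hAcd.continuous.comp continuous_snd).continuousOn.prodMk
          ((hMcont.mono (Set.subset_univ _)).comp continuous_snd.continuousOn
            (fun q _ => Set.mem_univ _)))
    exact (h3.clm_apply h4).norm
  obtain ⟨C, hC⟩ := hKc.exists_bound_of_continuousOn hh2cont
  have hrC : ∀ lam ∈ Set.Ioc (0:ℝ) 1, r lam ≤ C * lam := by
    intro lam hlam
    have hzbd : ∀ z ∈ closure O, H (z, u z + lam • A z,
        gradMatrix u z + lam • gradMatrix A z)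
          ≤ C * lam + Einf H u O := by
      intro z hz
      have hzΩ : z ∈ Ω := hOΩ hz
      set f : ℝ → ℝ := fun t => H (c (t, z)) with hf
      set f' : ℝ → ℝ := fun t => fderiv ℝ H (c (t, z))
        ((0 : EuclideanSpace ℝ (Fin n)), A z, gradMatrix A z) with hf'
      have hder : ∀ t ∈ Set.Icc (0:ℝ) 1, HasDerivWithinAt f (f' t) (Set.Icc 0 1) t := by
        intro t ht
        have hct : HasDerivAt (fun s : ℝ => c (s, z))
            ((0 : EuclideanSpace ℝ (Fin n)), A z, gradMatrix A z) t := by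
          have h1 : HasDerivAt (fun s : ℝ => u z + s • A z) (A z) t := by
            simpa using ((hasDerivAt_id t).smul_const (A z)).const_add (u z)
          have h2' : HasDerivAt (fun s : ℝ => gradMatrix u z + s • gradMatrix A z)
              (gradMatrix A z) t := by
            simpa using ((hasDerivAt_id t).smul_const (gradMatrix A z)).const_add
              (gradMatrix u z)
          exact (hasDerivAt_const t z).prodMk (h1.prodMk h2')
        have hdH : DifferentiableAt ℝ H (c (t, z)) :=
          (hH.contDiffAt (hopen.mem_nhds (hcK (t, z) ⟨ht, hz⟩))).differentiableAt two_ne_zero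
        exact (hdH.hasFDerivAt.comp_hasDerivAt t hct).hasDerivWithinAt
      have hbound : ∀ t ∈ Set.Icc (0:ℝ) 1, ‖f' t‖ ≤ C := by
        intro t ht
        have := hC (t, z) ⟨ht, hz⟩
        simpa [hf', hh2, norm_norm] using this
      have hmvt := (convex_Icc (0:ℝ) 1).norm_image_sub_le_of_norm_hasDerivWithin_le
        hder hbound (Set.left_mem_Icc.2 zero_le_one)
        (Set.mem_Icc.2 ⟨hlam.1.le, hlam.2⟩)
      have h5 : f lam - f 0 ≤ C * lam := by
        have h6 : |f lam - f 0| ≤ C * |lam - 0| := by simpa [Real.norm_eq_abs] using hmvt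
        have h7 : |lam - 0| = lam := by rw [sub_zero, abs_of_pos hlam.1]
        rw [h7] at h6
        linarith [le_abs_self (f lam - f 0)]
      have hf0le : f 0 ≤ Einf H u O := by
        have : f 0 = H (z, u z, gradMatrix u z) := by simp [hf, hcdef]
        rw [this]
        exact le_csSup hEinfu_bdd ⟨z, hz, rfl⟩
      have : f lam = H (z, u z + lam • A z, gradMatrix u z + lam • gradMatrix A z) := rfl
      linarith
    have hEle : Einf H (fun z => u z + lam • A z) O ≤ C * lam + Einf H u O := by
      refine csSup_le ((Set.nonempty_of_mem hxO).image _) ?_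
      rintro b ⟨z, hz, rfl⟩
      have h3 : gradMatrix (fun w => u w + lam • A w) z
          = gradMatrix u z + lam • gradMatrix A z :=
        gradMatrix_add_smul (hud z (hOΩ hz)) (hAd z) lam
      show H (z, u z + lam • A z, gradMatrix (fun w => u w + lam • A w) z)
          ≤ C * lam + Einf H u O
      rw [h3]
      exact hzbd z hz
    rw [hr lam]
    linarith
  have hcobound : IsCoboundedUnder (· ≥ ·) (𝓝[>] (0:ℝ)) (fun lam => r lam / lam) := by
    have hevC : ∀ᶠ lam in 𝓝[>] (0:ℝ), r lam / lam ≤ C := by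
      filter_upwards [Ioc_mem_nhdsGT_of_mem (Set.left_mem_Ico.2 zero_lt_one)] with lam hlam
      rw [div_le_iff₀ hlam.1]
      exact hrC lam hlam
    exact isCoboundedUnder_ge_of_eventually_le _ hevC
  -- liminf comparison
  have hslope : Tendsto (fun lam : ℝ => (φ lam - φ 0) / lam) (𝓝[>] (0:ℝ)) (𝓝 d) := by
    have h1 := hasDerivAt_iff_tendsto_slope.1 hφd
    have h2 : Tendsto (slope φ 0) (𝓝[>] (0:ℝ)) (𝓝 d) :=
      h1.mono_left (nhdsWithin_mono 0 (fun y hy => ne_of_gt hy))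
    refine h2.congr (fun lam => ?_)
    rw [slope_def_field]
    rw [sub_zero]
  have hev : ∀ᶠ lam in 𝓝[>] (0:ℝ), (φ lam - φ 0) / lam ≤ r lam / lam := by
    filter_upwards [self_mem_nhdsWithin] with lam hlam
    exact div_le_div_of_nonneg_right (hcomp lam) (le_of_lt hlam)
  have hliminf : d ≤ liminf (fun lam : ℝ => r lam / lam) (𝓝[>] (0:ℝ)) := by
    have h1 : liminf (fun lam : ℝ => (φ lam - φ 0) / lam) (𝓝[>] (0:ℝ)) = d :=
      hslope.liminf_eq
    rw [← h1]
    exact liminf_le_liminf hev hslope.isBoundedUnder_ge hcobound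
  calc ⟪gradient (fun Q => H (x, u x, Q)) P, M⟫
      + ⟪gradient (fun η => H (x, η, P)) (u x), A x⟫ = d := hdsum
    _ ≤ _ := hliminf
end
end

section
/- Let Ω ⊆ ℝⁿ be open, O ⋐ Ω, u ∈ C¹(Ω, ℝᴺ), H ∈ C²(Ω × ℝᴺ × ℝ^{N×n}, ℝ) with H(x,·,·) jointly convex on ℝᴺ × ℝ^{N×n} for each x, and A : ℝⁿ → ℝᴺ affine. Fix a point x ∈ O̅ with H(x, u(x), Du(x)) = max_{y∈O̅} H(y, u(y), Du(y)), and suppose ⟨H_P(x,u(x),Du(x)), DA⟩ + ⟨H_η(x,u(x),Du(x)), A(x)⟩ ≥ 0. Then E_∞(u, O) ≤ E_∞(u + A, O), where E_∞(v, O) := max_{y∈O̅} H(y, v(y), Dv(y)). -/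
open scoped RealInnerProductSpace

noncomputable section

/-- Pairing of the gradient with a vector is the Fréchet derivative. -/
lemma inner_gradient_eq_fderiv {F : Type*} [NormedAddCommGroup F] [InnerProductSpace ℝ F]
    [CompleteSpace F] (f : F → ℝ) (x w : F) :
    ⟪gradient f x, w⟫ = fderiv ℝ f x w := by
  rw [gradient, ← InnerProductSpace.toDual_apply_apply, LinearIsometryEquiv.apply_symm_apply]

/-- Additivity of `gradMatrix`. -/
lemma gradMatrix_add {n N : ℕ} {u A : EuclideanSpace ℝ (Fin n) → EuclideanSpace ℝ (Fin N)}
    {x : EuclideanSpace ℝ (Fin n)} (hu : DifferentiableAt ℝ u x)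
    (hA : DifferentiableAt ℝ A x) :
    gradMatrix (fun z => u z + A z) x = gradMatrix u x + gradMatrix A x := by
  unfold gradMatrix
  rw [fderiv_fun_add hu hA]
  show _ = (WithLp.equiv 2 _).symm (_ + _)
  congr 1

/-- If `H(x,·,·)` is jointly convex, `x ∈ O̅` is a maximiser of
`y ↦ H(y,u(y),Du(y))` over `O̅`, and
`⟨H_P(x,u(x),Du(x)), DA⟩ + ⟨H_η(x,u(x),Du(x)), A(x)⟩ ≥ 0`, then
`E_∞(u, O) ≤ E_∞(u + A, O)`. -/
theorem energy_minimality_of_first_variation_nonneg {n N : ℕ}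
    (Ω O : Set (EuclideanSpace ℝ (Fin n))) (hΩ : IsOpen Ω)
    (hOc : IsCompact (closure O)) (hOΩ : closure O ⊆ Ω)
    (u : EuclideanSpace ℝ (Fin n) → EuclideanSpace ℝ (Fin N))
    (hu : ContDiffOn ℝ 1 u Ω)
    (H : EuclideanSpace ℝ (Fin n) × EuclideanSpace ℝ (Fin N) ×
      EuclideanSpace ℝ (Fin N × Fin n) → ℝ)
    (hH : ContDiffOn ℝ 2 H (Ω ×ˢ (Set.univ : Set (EuclideanSpace ℝ (Fin N) ×
      EuclideanSpace ℝ (Fin N × Fin n)))))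
    (hconv : ∀ z : EuclideanSpace ℝ (Fin n),
      ConvexOn ℝ Set.univ (fun p : EuclideanSpace ℝ (Fin N) ×
        EuclideanSpace ℝ (Fin N × Fin n) => H (z, p.1, p.2)))
    (A : EuclideanSpace ℝ (Fin n) → EuclideanSpace ℝ (Fin N))
    (LA : EuclideanSpace ℝ (Fin n) →ₗ[ℝ] EuclideanSpace ℝ (Fin N))
    (bA : EuclideanSpace ℝ (Fin N)) (hA : ∀ z, A z = LA z + bA)
    (x : EuclideanSpace ℝ (Fin n)) (hx : x ∈ closure O)
    (hxmax : H (x, u x, gradMatrix u x) = Einf H u O)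
    (hineq : 0 ≤ ⟪gradient (fun Q => H (x, u x, Q)) (gradMatrix u x), gradMatrix A x⟫
        + ⟪gradient (fun η => H (x, η, gradMatrix u x)) (u x), A x⟫) :
    Einf H u O ≤ Einf H (fun z => u z + A z) O := by
  classical
  let E1 := EuclideanSpace ℝ (Fin n)
  let E2 := EuclideanSpace ℝ (Fin N)
  let E3 := EuclideanSpace ℝ (Fin N × Fin n)
  have hAeq : A = fun z => LA z + bA := funext hA
  have hAcd : ContDiff ℝ 2 A := by
    rw [hAeq]
    exact (LA.toContinuousLinearMap.contDiff.add contDiff_const)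
  have hAdiff : ∀ z, DifferentiableAt ℝ A z := fun z => (hAcd.differentiable (by norm_num)) z
  have hΩnhds : ∀ z ∈ closure O, Ω ∈ nhds z := fun z hz => hΩ.mem_nhds (hOΩ hz)
  have hudiff : DifferentiableAt ℝ u x :=
    ((hu.contDiffAt (hΩnhds x hx)).differentiableAt (by norm_num))
  set q₀ : E3 := gradMatrix u x with hq₀
  set G : E3 := gradMatrix A x with hG
  set z₀ : E1 × E2 × E3 := (x, u x, q₀) with hz₀
  have hopen : IsOpen (Ω ×ˢ (Set.univ : Set (E2 × E3))) := hΩ.prod isOpen_univ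
  have hz₀mem : z₀ ∈ Ω ×ˢ (Set.univ : Set (E2 × E3)) := ⟨hOΩ hx, Set.mem_univ _⟩
  have hHdiff : DifferentiableAt ℝ H z₀ :=
    ((hH.contDiffAt (hopen.mem_nhds hz₀mem)).differentiableAt (by norm_num))
  set D := fderiv ℝ H z₀ with hD
  -- partial derivative in Q
  have hQ : HasFDerivAt (fun Q : E3 => H (x, u x, Q))
      (D.comp (((0 : E3 →L[ℝ] E1)).prod (((0 : E3 →L[ℝ] E2)).prod
        (ContinuousLinearMap.id ℝ E3)))) q₀ :=
    hHdiff.hasFDerivAt.comp q₀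
      (HasFDerivAt.prodMk (hasFDerivAt_const x q₀) (HasFDerivAt.prodMk (hasFDerivAt_const (u x) q₀) (hasFDerivAt_id q₀)))
  have hQ' : ⟪gradient (fun Q : E3 => H (x, u x, Q)) q₀, G⟫ = D (0, 0, G) := by
    rw [inner_gradient_eq_fderiv, hQ.fderiv]
    rfl
  -- partial derivative in η
  have hη : HasFDerivAt (fun η : E2 => H (x, η, q₀))
      (D.comp (((0 : E2 →L[ℝ] E1)).prod ((ContinuousLinearMap.id ℝ E2).prod
        ((0 : E2 →L[ℝ] E3))))) (u x) :=
    hHdiff.hasFDerivAt.comp (u x)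
      (HasFDerivAt.prodMk (hasFDerivAt_const x (u x)) (HasFDerivAt.prodMk (hasFDerivAt_id (u x)) (hasFDerivAt_const q₀ (u x))))
  have hη' : ⟪gradient (fun η : E2 => H (x, η, q₀)) (u x), A x⟫ = D (0, A x, 0) := by
    rw [inner_gradient_eq_fderiv, hη.fderiv]
    rfl
  have hineq' : (0 : ℝ) ≤ D (0, A x, G) := by
    have : ((0 : E1), A x, G) = ((0 : E1), (0 : E2), G) + ((0 : E1), A x, (0 : E3)) := by
      simp [Prod.ext_iff]
    rw [this, map_add]
    rw [hQ', hη'] at hineq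
    linarith
  -- convexity along the segment
  set f : E2 × E3 → ℝ := fun p => H (x, p.1, p.2) with hf
  set p₀ : E2 × E3 := (u x, q₀) with hp₀
  set v : E2 × E3 := (A x, G) with hv
  have hfder : HasFDerivAt f
      (D.comp (((0 : E2 × E3 →L[ℝ] E1)).prod (ContinuousLinearMap.id ℝ (E2 × E3)))) p₀ :=
    hHdiff.hasFDerivAt.comp p₀ (HasFDerivAt.prodMk (hasFDerivAt_const x p₀) (hasFDerivAt_id p₀))
  set g : ℝ → ℝ := fun t => f (p₀ + t • v) with hg
  have hc : HasDerivAt (fun t : ℝ => p₀ + t • v) v 0 := by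
    exact HasDerivAt.const_add p₀ (by simpa using (hasDerivAt_id (0 : ℝ)).smul_const v)
  have hgder : HasDerivAt g (D (0, v.1, v.2)) 0 := by
    have h0 : p₀ + (0 : ℝ) • v = p₀ := by simp
    have hfder0 : HasFDerivAt f
        (D.comp (((0 : E2 × E3 →L[ℝ] E1)).prod (ContinuousLinearMap.id ℝ (E2 × E3))))
        (p₀ + (0 : ℝ) • v) := h0.symm ▸ hfder
    have := hfder0.comp_hasDerivAt (0 : ℝ) hc; exact this
  have hgconv : ConvexOn ℝ Set.univ g := by
    have haff := (hconv x).comp_affineMap (AffineMap.lineMap p₀ (p₀ + v) : ℝ →ᵃ[ℝ] E2 × E3)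
    have : (fun p : E2 × E3 => H (x, p.1, p.2)) ∘
        (AffineMap.lineMap p₀ (p₀ + v) : ℝ →ᵃ[ℝ] E2 × E3) = g := by
      funext t
      simp [g, f, AffineMap.lineMap_apply]
      rw [add_comm]
    rw [this] at haff
    simpa using haff
  have hslope := hgconv.le_slope_of_hasDerivAt (Set.mem_univ (0 : ℝ)) (Set.mem_univ (1 : ℝ))
    zero_lt_one hgder
  have hkey : g 0 ≤ g 1 := by
    have hs : slope g 0 1 = g 1 - g 0 := by simp [slope]
    have hv' : D (0, v.1, v.2) = D (0, A x, G) := rfl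
    rw [hs, hv'] at hslope
    linarith
  -- identify g 0 and g 1
  have hg0 : g 0 = H (x, u x, q₀) := by simp [g, f, p₀]
  have hg1 : g 1 = H (x, u x + A x, q₀ + G) := by simp [g, f, p₀, v]
  -- w := u + A
  set w : E1 → E2 := fun z => u z + A z with hw
  have hwgrad : gradMatrix w x = q₀ + G := gradMatrix_add hudiff (hAdiff x)
  have hwx : w x = u x + A x := rfl
  -- continuity of the energy density for w on closure O
  have hwcd : ContDiffOn ℝ 1 w Ω := hu.add ((hAcd.of_le (by norm_num)).contDiffOn)
  have hfdercont : ContinuousOn (fun z => fderiv ℝ w z) Ω :=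
    hwcd.continuousOn_fderiv_of_isOpen hΩ le_rfl
  have hgmcont : ContinuousOn (fun z => gradMatrix w z) Ω := by
    have : Continuous ((WithLp.equiv 2 ((Fin N × Fin n) → ℝ)).symm) :=
      PiLp.continuous_toLp 2 _
    apply this.comp_continuousOn
    apply continuousOn_pi.mpr
    intro p
    exact ((EuclideanSpace.proj p.1 :
        E2 →L[ℝ] ℝ).continuous.comp
      (ContinuousLinearMap.apply ℝ E2 (EuclideanSpace.single p.2 (1 : ℝ))).continuous).comp_continuousOn
        hfdercont
  have hwcont : ContinuousOn (fun z => H (z, w z, gradMatrix w z)) (closure O) := by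
    apply (hH.continuousOn.comp (f := fun z => (z, w z, gradMatrix w z)) _ _).mono (le_refl _)
    · exact (continuousOn_id.prodMk ((hwcd.continuousOn.prodMk hgmcont))).mono hOΩ
    · intro z hz; exact ⟨hOΩ hz, Set.mem_univ _⟩
  have hbdd : BddAbove ((fun z => H (z, w z, gradMatrix w z)) '' closure O) :=
    (hOc.image_of_continuousOn hwcont).bddAbove
  have hle : H (x, w x, gradMatrix w x) ≤ Einf H w O :=
    le_csSup hbdd ⟨x, hx, rfl⟩
  calc Einf H u O = H (x, u x, q₀) := hxmax.symm
    _ = g 0 := hg0.symm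
    _ ≤ g 1 := hkey
    _ = H (x, u x + A x, q₀ + G) := hg1
    _ = H (x, w x, gradMatrix w x) := by rw [hwx, hwgrad]
    _ ≤ Einf H w O := hle
end
end
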